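/- Fix β > log 4. There exists a critical value K_c^{(1)}(β) > 0 such that: (i) for every 0 < K < K_c^{(1)}(β), E_{β,K} = {ρ_β}; (ii) for K = K_c^{(1)}(β) there exist ν⁺ and ν⁻ in P with ν⁺ ≠ ν⁻, ν⁺ ≠ ρ_β, ν⁻ ≠ ρ_β, and E_{β,K} = {ρ_β, ν⁺, ν⁻}; (iii) for every K > K_c^{(1)}(β) there exist ν⁺ = ν⁺(β,K) and ν⁻ = ν⁻(β,K) with ν⁺ ≠ ν⁻, ν⁺ ≠ ρ_β, ν⁻ ≠ ρ_β, and E_{β,K} = {ν⁺, ν⁻}; and in cases (ii) and (iii) ν⁻ is obtained from ν⁺ by interchanging its components at −1 and at 1 (i.e. ν⁻₋₁ = ν⁺₁, ν⁻₀ = ν⁺₀, ν⁻₁ = ν⁺₋₁). -/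

import Mathlib

noncomputable section

/-- `μ = (μ₋₁, μ₀, μ₁)` is a probability vector on `Λ = {-1,0,1}`. -/
def IsProbVec (μ : ℝ × ℝ × ℝ) : Prop :=
  0 ≤ μ.1 ∧ 0 ≤ μ.2.1 ∧ 0 ≤ μ.2.2 ∧ μ.1 + μ.2.1 + μ.2.2 = 1

/-- Relative entropy `R(μ|ρ)` with respect to the uniform measure `ρ = (1/3,1/3,1/3)`
(the convention `0 · log 0 = 0` holds automatically since `Real.log 0 = 0`). -/
def relEntUnif (μ : ℝ × ℝ × ℝ) : ℝ :=
  μ.1 * Real.log (3 * μ.1) + μ.2.1 * Real.log (3 * μ.2.1) + μ.2.2 * Real.log (3 * μ.2.2)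

/-- `f_K(μ) = (μ₁ + μ₋₁) − K (μ₁ − μ₋₁)²`. -/
def fK (K : ℝ) (μ : ℝ × ℝ × ℝ) : ℝ :=
  (μ.2.2 + μ.1) - K * (μ.2.2 - μ.1) ^ 2

/-- The set `E_{β,K}` of canonical equilibrium macrostates: the minimizers of
`R(μ|ρ) + β f_K(μ)` over probability vectors. -/
def canonE (β K : ℝ) : Set (ℝ × ℝ × ℝ) :=
  {μ | IsProbVec μ ∧ ∀ ν, IsProbVec ν →
    relEntUnif μ + β * fK K μ ≤ relEntUnif ν + β * fK K ν}

/-- The measure `ρ_β` with `ρ_β(±1) = e^{−β}/(1+2e^{−β})` and `ρ_β(0) = 1/(1+2e^{−β})`. -/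
def rhoBeta (β : ℝ) : ℝ × ℝ × ℝ :=
  (Real.exp (-β) / (1 + 2 * Real.exp (-β)),
   1 / (1 + 2 * Real.exp (-β)),
   Real.exp (-β) / (1 + 2 * Real.exp (-β)))

/-- The second-order critical value `K_c^{(2)}(β) = 1/(4βe^{−β}) + 1/(2β)`. -/
def Kc2 (β : ℝ) : ℝ := 1 / (4 * β * Real.exp (-β)) + 1 / (2 * β)


set_option linter.unusedSectionVars false
set_option maxHeartbeats 1000000

open Real Set
noncomputable section
namespace BEG

lemma smono {f f' : ℝ → ℝ} {s : Set ℝ} (hs : Convex ℝ s)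
    (hd : ∀ t ∈ s, HasDerivAt f (f' t) t)
    (hp : ∀ t ∈ interior s, 0 < f' t) : StrictMonoOn f s :=
  strictMonoOn_of_deriv_pos hs (fun t ht => (hd t ht).continuousAt.continuousWithinAt)
    (fun t ht => by rw [(hd t (interior_subset ht)).deriv]; exact hp t ht)

lemma santi {f f' : ℝ → ℝ} {s : Set ℝ} (hs : Convex ℝ s)
    (hd : ∀ t ∈ s, HasDerivAt f (f' t) t)
    (hp : ∀ t ∈ interior s, f' t < 0) : StrictAntiOn f s :=
  strictAntiOn_of_deriv_neg hs (fun t ht => (hd t ht).continuousAt.continuousWithinAt)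
    (fun t ht => by rw [(hd t (interior_subset ht)).deriv]; exact hp t ht)

lemma mono_of {f f' : ℝ → ℝ} {s : Set ℝ} (hs : Convex ℝ s)
    (hd : ∀ t ∈ s, HasDerivAt f (f' t) t)
    (hp : ∀ t ∈ interior s, 0 ≤ f' t) : MonotoneOn f s :=
  monotoneOn_of_deriv_nonneg hs (fun t ht => (hd t ht).continuousAt.continuousWithinAt)
    (fun t ht => (hd t (interior_subset ht)).differentiableAt.differentiableWithinAt)
    (fun t ht => by rw [(hd t (interior_subset ht)).deriv]; exact hp t ht)

lemma anti_of {f f' : ℝ → ℝ} {s : Set ℝ} (hs : Convex ℝ s)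
    (hd : ∀ t ∈ s, HasDerivAt f (f' t) t)
    (hp : ∀ t ∈ interior s, f' t ≤ 0) : AntitoneOn f s :=
  antitoneOn_of_deriv_nonpos hs (fun t ht => (hd t ht).continuousAt.continuousWithinAt)
    (fun t ht => (hd t (interior_subset ht)).differentiableAt.differentiableWithinAt)
    (fun t ht => by rw [(hd t (interior_subset ht)).deriv]; exact hp t ht)

lemma pos_of_deriv {f f' : ℝ → ℝ} (h0 : f 0 = 0)
    (hd : ∀ t, HasDerivAt f (f' t) t)
    (hp : ∀ t, 0 < t → 0 ≤ f' t) {t : ℝ} (ht : 0 < t) : 0 ≤ f t := by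
  have h := mono_of (convex_Ici (0:ℝ)) (fun s _ => hd s)
    (fun s hs => hp s (by simpa [interior_Ici] using hs))
  calc (0:ℝ) = f 0 := h0.symm
    _ ≤ f t := h (self_mem_Ici) (le_of_lt ht) ht.le

lemma pos_of_deriv' {f f' : ℝ → ℝ} (h0 : f 0 = 0)
    (hd : ∀ t, HasDerivAt f (f' t) t)
    (hp : ∀ t, 0 < t → 0 < f' t) {t : ℝ} (ht : 0 < t) : 0 < f t := by
  have h := smono (convex_Ici (0:ℝ)) (fun s _ => hd s)
    (fun s hs => hp s (by simpa [interior_Ici] using hs))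
  calc (0:ℝ) = f 0 := h0.symm
    _ < f t := h (self_mem_Ici) ht.le ht

/-- `t cosh t - sinh t > 0` for `t > 0`. -/
lemma D0_pos {t : ℝ} (ht : 0 < t) : 0 < t * cosh t - sinh t := by
  refine pos_of_deriv' (f := fun t : ℝ => t * cosh t - sinh t)
    (f' := fun t : ℝ => t * sinh t) (by simp) (fun s => ?_) (fun s hs => ?_) ht
  · have h : HasDerivAt (fun t : ℝ => t * cosh t - sinh t)
        (1 * cosh s + s * sinh s - cosh s) s :=
      ((hasDerivAt_id s).mul (Real.hasDerivAt_cosh s)).sub (Real.hasDerivAt_sinh s)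
    convert h using 1; ring
  · have := Real.sinh_pos_iff.2 hs
    show 0 < s * sinh s
    positivity

/-- `sinh t cosh t - t > 0` for `t > 0`. -/
lemma N0_pos {t : ℝ} (ht : 0 < t) : 0 < sinh t * cosh t - t := by
  refine pos_of_deriv' (f := fun t : ℝ => sinh t * cosh t - t)
    (f' := fun t : ℝ => 2 * sinh t ^ 2) (by simp) (fun s => ?_) (fun s hs => ?_) ht
  · have h : HasDerivAt (fun t : ℝ => sinh t * cosh t - t)
        (cosh s * cosh s + sinh s * sinh s - 1) s :=
      ((Real.hasDerivAt_sinh s).mul (Real.hasDerivAt_cosh s)).sub (hasDerivAt_id s)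
    convert h using 1
    show 2 * sinh s ^ 2 = cosh s * cosh s + sinh s * sinh s - 1
    have := Real.cosh_sq_sub_sinh_sq s
    nlinarith [this]
  · have := Real.sinh_pos_iff.2 hs
    show (0:ℝ) < 2 * sinh s ^ 2
    positivity

/-- `H t := t (1 + 2 cosh² t) - 3 sinh t cosh t > 0` for `t > 0`. -/
lemma H_pos {t : ℝ} (ht : 0 < t) : 0 < t * (1 + 2 * cosh t ^ 2) - 3 * (sinh t * cosh t) := by
  refine pos_of_deriv' (f := fun t : ℝ => t * (1 + 2 * cosh t ^ 2) - 3 * (sinh t * cosh t))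
    (f' := fun t : ℝ => 4 * sinh t * (t * cosh t - sinh t))
    (by simp) (fun s => ?_) (fun s hs => ?_) ht
  · have h : HasDerivAt (fun t : ℝ => t * (1 + 2 * cosh t ^ 2) - 3 * (sinh t * cosh t))
        (1 * (1 + 2 * cosh s ^ 2) + s * (2 * (2 * cosh s * sinh s)) -
          3 * (cosh s * cosh s + sinh s * sinh s)) s := by
      have h1 : HasDerivAt (fun t : ℝ => 1 + 2 * cosh t ^ 2) (2 * (2 * cosh s * sinh s)) s := by
        have h2 : HasDerivAt (fun t : ℝ => cosh t ^ 2) (2 * cosh s ^ (2-1) * sinh s) s :=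
          (Real.hasDerivAt_cosh s).pow 2
        have h3 := (h2.const_mul (2:ℝ)).const_add (1:ℝ)
        rw [show (2:ℕ) - 1 = 1 from rfl, pow_one] at h3; exact h3
      exact ((hasDerivAt_id s).mul h1).sub
        (((Real.hasDerivAt_sinh s).mul (Real.hasDerivAt_cosh s)).const_mul 3)
    convert h using 1
    show 4 * sinh s * (s * cosh s - sinh s) =
      1 * (1 + 2 * cosh s ^ 2) + s * (2 * (2 * cosh s * sinh s)) -
        3 * (cosh s * cosh s + sinh s * sinh s)
    have := Real.cosh_sq_sub_sinh_sq s
    nlinarith [this]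
  · have h1 := D0_pos hs
    have h2 := Real.sinh_pos_iff.2 hs
    show (0:ℝ) < 4 * sinh s * (s * cosh s - sinh s)
    positivity

/-- `Q t := t sinh t cosh t - 2 sinh² t + t² > 0` for `t > 0`. -/
lemma Q_pos {t : ℝ} (ht : 0 < t) :
    0 < t * (sinh t * cosh t) - 2 * sinh t ^ 2 + t ^ 2 := by
  refine pos_of_deriv' (f := fun t : ℝ => t * (sinh t * cosh t) - 2 * sinh t ^ 2 + t ^ 2)
    (f' := fun t : ℝ => t * (1 + 2 * cosh t ^ 2) - 3 * (sinh t * cosh t))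
    (by simp) (fun s => ?_) (fun s hs => H_pos hs) ht
  · have h2 : HasDerivAt (fun t : ℝ => sinh t ^ 2) (2 * sinh s ^ (2-1) * cosh s) s :=
      (Real.hasDerivAt_sinh s).pow 2
    have h : HasDerivAt (fun t : ℝ => t * (sinh t * cosh t) - 2 * sinh t ^ 2 + t ^ 2)
        (1 * (sinh s * cosh s) + s * (cosh s * cosh s + sinh s * sinh s) -
          2 * (2 * sinh s ^ 1 * cosh s) + 2 * s ^ 1) s :=
      (((hasDerivAt_id s).mul
        ((Real.hasDerivAt_sinh s).mul (Real.hasDerivAt_cosh s))).sub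
        (h2.const_mul (2:ℝ))).add (hasDerivAt_pow 2 s)
    convert h using 1
    show s * (1 + 2 * cosh s ^ 2) - 3 * (sinh s * cosh s) =
      1 * (sinh s * cosh s) + s * (cosh s * cosh s + sinh s * sinh s) -
        2 * (2 * sinh s ^ 1 * cosh s) + 2 * s ^ 1
    have := Real.cosh_sq_sub_sinh_sq s
    linear_combination s * this

/-- `cosh t ≥ 1 + t²/2`. -/
lemma cosh_ge {t : ℝ} (ht : 0 ≤ t) : 1 + t ^ 2 / 2 ≤ cosh t := by
  rcases eq_or_lt_of_le ht with h | h
  · simp [← h]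
  have h0 := pos_of_deriv (f := fun t : ℝ => cosh t - 1 - t ^ 2 / 2)
    (f' := fun t : ℝ => sinh t - t) (by simp) (fun s => ?_) (fun s hs => ?_) h
  · linarith [h0]
  · have h1 : HasDerivAt (fun t : ℝ => cosh t - 1 - t ^ 2 / 2)
        (sinh s - (2 * s ^ 1 / 2)) s :=
      ((Real.hasDerivAt_cosh s).sub_const 1).sub ((hasDerivAt_pow 2 s).div_const 2)
    convert h1 using 1; ring
  · show 0 ≤ sinh s - s
    have := Real.self_le_sinh_iff.2 hs.le
    linarith

/-- `sinh t ≥ t + t³/6` for `t ≥ 0`. -/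
lemma sinh_ge {t : ℝ} (ht : 0 ≤ t) : t + t ^ 3 / 6 ≤ sinh t := by
  rcases eq_or_lt_of_le ht with h | h
  · simp [← h]
  have h0 := pos_of_deriv (f := fun t : ℝ => sinh t - t - t ^ 3 / 6)
    (f' := fun t : ℝ => cosh t - 1 - t ^ 2 / 2) (by simp) (fun s => ?_) (fun s hs => ?_) h
  · linarith [h0]
  · have h1 : HasDerivAt (fun t : ℝ => sinh t - t - t ^ 3 / 6)
        (cosh s - 1 - (3 * s ^ 2 / 6)) s :=
      ((Real.hasDerivAt_sinh s).sub (hasDerivAt_id s)).sub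
        (by simpa using (hasDerivAt_pow 3 s).div_const 6)
    convert h1 using 1; ring
  · show 0 ≤ cosh s - 1 - s ^ 2 / 2
    have := cosh_ge hs.le; linarith


/-! ### The one-parameter curve of slice minimizers -/

/-- magnetization along the curve -/
def wf (e t : ℝ) : ℝ := e * sinh t / (1 + e * cosh t)

/-- reduced free energy slope function `χ(t) = t / w(t)` -/
def chi (e t : ℝ) : ℝ := t * (1 + e * cosh t) / (e * sinh t)

def Zf (e t : ℝ) : ℝ := e * (sinh t * cosh t - t) - (t * cosh t - sinh t)

def Mf (t : ℝ) : ℝ := (sinh t * cosh t - t) / (t * cosh t - sinh t)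

def eps (β : ℝ) : ℝ := 2 * exp (-β)

def mu0 (β t : ℝ) : ℝ := 1 / (1 + eps β * cosh t)

def nu (β t : ℝ) : ℝ × ℝ × ℝ :=
  (exp (-β) * exp (-t) * mu0 β t, mu0 β t, exp (-β) * exp t * mu0 β t)

def FF (β K t : ℝ) : ℝ :=
  log 3 - log (1 + eps β * cosh t) + t * wf (eps β) t - β * K * (wf (eps β) t) ^ 2

def wd (e t : ℝ) : ℝ := e * (cosh t + e) / (1 + e * cosh t) ^ 2

section wlem
variable {e : ℝ} (he : 0 < e)

include he

lemma den_pos (t : ℝ) : 0 < 1 + e * cosh t := by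
  nlinarith [Real.cosh_pos (x := t), he]

lemma wf_lt_one (t : ℝ) : wf e t < 1 := by
  rw [wf, div_lt_one (den_pos he t)]
  have h : cosh t - sinh t = exp (-t) := Real.cosh_sub_sinh t
  nlinarith [Real.exp_pos (-t)]

lemma neg_one_lt_wf (t : ℝ) : -1 < wf e t := by
  rw [wf, lt_div_iff₀ (den_pos he t)]
  have h : cosh t + sinh t = exp t := Real.cosh_add_sinh t
  nlinarith [Real.exp_pos t]

lemma hasDerivAt_wf (t : ℝ) : HasDerivAt (wf e) (wd e t) t := by
  have h : HasDerivAt (fun t : ℝ => e * sinh t / (1 + e * cosh t))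
      ((e * cosh t * (1 + e * cosh t) - e * sinh t * (e * sinh t)) / (1 + e * cosh t) ^ 2) t := by
    exact ((Real.hasDerivAt_sinh t).const_mul e).div
      (((Real.hasDerivAt_cosh t).const_mul e).const_add 1) (den_pos he t).ne'
  have hnum : e * (cosh t + e) = e * cosh t * (1 + e * cosh t) - e * sinh t * (e * sinh t) := by
    linear_combination (-(e * e)) * (Real.cosh_sq_sub_sinh_sq t)
  rw [wd, hnum]; exact h

lemma wf_strictMono : StrictMono (wf e) := by
  have h := smono (f := wf e) (f' := wd e) convex_univ (fun t _ => hasDerivAt_wf he t)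
    (fun t _ => by
      rw [wd]
      exact div_pos (mul_pos he (add_pos (Real.cosh_pos t) he))
        (pow_pos (den_pos he t) 2))
  exact fun a b hab => h (mem_univ a) (mem_univ b) hab

lemma wf_zero : wf e 0 = 0 := by simp [wf]

lemma wf_neg (t : ℝ) : wf e (-t) = -(wf e t) := by
  simp [wf, Real.sinh_neg, Real.cosh_neg, neg_div]

lemma wf_pos {t : ℝ} (ht : 0 < t) : 0 < wf e t := by
  have := wf_strictMono he ht
  rwa [wf_zero he] at this

lemma wf_surj {m : ℝ} (hm : |m| < 1) : ∃ t, wf e t = m := by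
  set C : ℝ := (1 + e) / (e * (1 - |m|)) with hC
  have hm1 : 0 < 1 - |m| := by linarith
  have hCpos : 0 < C := by positivity
  set T : ℝ := Real.sqrt (2 * C) with hT
  have hT0 : 0 ≤ T := Real.sqrt_nonneg _
  have hcosh : C ≤ cosh T := by
    have h1 := cosh_ge hT0
    have h2 : T ^ 2 = 2 * C := Real.sq_sqrt (by positivity)
    nlinarith
  have hwT : |m| ≤ wf e T := by
    rw [wf, le_div_iff₀ (den_pos he T)]
    have h : cosh T - sinh T = exp (-T) := Real.cosh_sub_sinh T
    have h2 : exp (-T) ≤ 1 := Real.exp_le_one_iff.2 (by linarith)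
    have h3 : (1 + e) ≤ e * (1 - |m|) * cosh T := by
      rw [hC] at hcosh
      calc (1 + e) = e * (1 - |m|) * ((1 + e) / (e * (1 - |m|))) := by
            field_simp
        _ ≤ e * (1 - |m|) * cosh T := by
            apply mul_le_mul_of_nonneg_left hcosh (by positivity)
      
    nlinarith [Real.cosh_pos (x := T)]
  have hwmT : wf e (-T) ≤ m := by
    rw [wf_neg he]
    have := neg_abs_le m
    linarith
  have hcont : ContinuousOn (wf e) (Icc (-T) T) :=
    fun t _ => (hasDerivAt_wf he t).continuousAt.continuousWithinAt
  have := intermediate_value_Icc (by linarith : -T ≤ T) hcont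
    (by constructor <;> [exact hwmT; exact le_trans (le_abs_self m) hwT])
  obtain ⟨t, _, ht⟩ := this
  exact ⟨t, ht⟩

lemma chi_w {t : ℝ} (ht : 0 < t) : wf e t * chi e t = t := by
  have hs : sinh t ≠ 0 := Real.sinh_ne_zero.2 ht.ne'
  rw [wf, chi]
  field_simp

lemma chi_gt_self {t : ℝ} (ht : 0 < t) : t < chi e t := by
  rw [chi]
  have hs : 0 < sinh t := Real.sinh_pos_iff.2 ht
  rw [lt_div_iff₀ (by positivity)]
  have h : cosh t - sinh t = exp (-t) := Real.cosh_sub_sinh t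
  have h1 : 0 < e * exp (-t) := mul_pos he (Real.exp_pos _)
  have h2 : t * (e * (cosh t - sinh t)) = t * (e * exp (-t)) := by rw [h]
  nlinarith [mul_pos ht h1, h2]

lemma hasDerivAt_chi {t : ℝ} (ht : 0 < t) :
    HasDerivAt (chi e) (e * Zf e t / (e * sinh t) ^ 2) t := by
  have hs : sinh t ≠ 0 := Real.sinh_ne_zero.2 ht.ne'
  have h : HasDerivAt (fun t : ℝ => t * (1 + e * cosh t) / (e * sinh t))
      (((1 * (1 + e * cosh t) + t * (e * sinh t)) * (e * sinh t) -
        t * (1 + e * cosh t) * (e * cosh t)) / (e * sinh t) ^ 2) t := by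
    exact ((hasDerivAt_id t).mul (((Real.hasDerivAt_cosh t).const_mul e).const_add 1)).div
      ((Real.hasDerivAt_sinh t).const_mul e) (by positivity)
  have hnum : e * Zf e t = (1 * (1 + e * cosh t) + t * (e * sinh t)) * (e * sinh t) -
      t * (1 + e * cosh t) * (e * cosh t) := by
    rw [Zf]
    linear_combination (t * e * e) * (Real.cosh_sq_sub_sinh_sq t)
  unfold chi
  rw [hnum]
  exact h

end wlem
/-! ### Shape of `χ`: strictly decreasing then strictly increasing -/

lemma hasDerivAt_Mf {t : ℝ} (ht : 0 < t) :
    HasDerivAt Mf (sinh t * (t * (sinh t * cosh t) - 2 * sinh t ^ 2 + t ^ 2) /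
      (t * cosh t - sinh t) ^ 2) t := by
  have hD := D0_pos ht
  have h : HasDerivAt (fun t : ℝ => (sinh t * cosh t - t) / (t * cosh t - sinh t))
      (((cosh t * cosh t + sinh t * sinh t - 1) * (t * cosh t - sinh t) -
        (sinh t * cosh t - t) * (1 * cosh t + t * sinh t - cosh t)) /
        (t * cosh t - sinh t) ^ 2) t := by
    exact (((Real.hasDerivAt_sinh t).mul (Real.hasDerivAt_cosh t)).sub (hasDerivAt_id t)).div
      (((hasDerivAt_id t).mul (Real.hasDerivAt_cosh t)).sub (Real.hasDerivAt_sinh t)) hD.ne'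
  have hnum : sinh t * (t * (sinh t * cosh t) - 2 * sinh t ^ 2 + t ^ 2) =
      (cosh t * cosh t + sinh t * sinh t - 1) * (t * cosh t - sinh t) -
        (sinh t * cosh t - t) * (1 * cosh t + t * sinh t - cosh t) := by
    linear_combination (-(t * cosh t - sinh t)) * (Real.cosh_sq_sub_sinh_sq t)
  unfold Mf
  rw [hnum]
  exact h

lemma Mf_mono : StrictMonoOn Mf (Ioi 0) := by
  refine smono (f' := fun t => sinh t * (t * (sinh t * cosh t) - 2 * sinh t ^ 2 + t ^ 2) /
      (t * cosh t - sinh t) ^ 2) (convex_Ioi 0) (fun t ht => hasDerivAt_Mf ht) (fun t ht => ?_)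
  rw [interior_Ioi] at ht
  exact div_pos (mul_pos (Real.sinh_pos_iff.2 ht) (Q_pos ht)) (pow_pos (D0_pos ht) 2)

lemma Mf_lt {t : ℝ} (ht : 0 < t) : Mf t < 2 * cosh t := by
  rw [Mf, div_lt_iff₀ (D0_pos ht)]
  nlinarith [H_pos ht]

lemma Mf_ge {t : ℝ} (ht : 0 < t) : t ^ 2 / 6 ≤ Mf t := by
  have h1 : (sinh t - t) / t ≤ Mf t := by
    rw [Mf, div_le_div_iff₀ ht (D0_pos ht)]
    have h2 := Real.self_le_sinh_iff.2 ht.le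
    have h3 := Real.one_le_cosh t
    nlinarith [mul_nonneg (by linarith [Real.sinh_pos_iff.2 ht] : (0:ℝ) ≤ sinh t)
        (by linarith : (0:ℝ) ≤ sinh t - t),
      mul_nonneg (sq_nonneg t) (by linarith : (0:ℝ) ≤ cosh t - 1)]
  refine le_trans ?_ h1
  rw [div_le_div_iff₀ (by norm_num) ht]
  have := sinh_ge ht.le
  nlinarith

lemma cosh_le_small {t : ℝ} (h0 : 0 ≤ t) (h1 : t ≤ 1) : cosh t ≤ 1 + t ^ 2 := by
  have hc1 : cosh 1 ≤ 2 := by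
    rw [Real.cosh_eq]
    have h2 := Real.exp_one_lt_d9
    have h3 : exp (-1) ≤ 1 := by
      rw [show (1:ℝ) = exp 0 by simp]
      exact Real.exp_le_exp.2 (by norm_num)
    norm_num
    linarith
  have hm := mono_of (f := fun t : ℝ => 1 + t ^ 2 - cosh t)
    (f' := fun t : ℝ => 2 * t - sinh t) (convex_Icc 0 1) (fun s _ => ?_) (fun s hs => ?_)
  · have := hm (left_mem_Icc.2 (by norm_num)) (mem_Icc.2 ⟨h0, h1⟩) h0
    simp only [cosh_zero] at this
    nlinarith [this]
  · have hd : HasDerivAt (fun t : ℝ => 1 + t ^ 2 - cosh t) (2 * s ^ 1 - sinh s) s :=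
      ((hasDerivAt_pow 2 s).const_add 1).sub (Real.hasDerivAt_cosh s)
    convert hd using 1; ring
  · rw [interior_Icc] at hs
    obtain ⟨hs0, hs1⟩ := hs
    have h5 : sinh s < s * cosh s := by nlinarith [D0_pos hs0]
    have h6 : cosh s ≤ 2 := by
      refine le_trans ?_ hc1
      rw [Real.cosh_le_cosh, abs_of_nonneg hs0.le, abs_one]
      exact hs1.le
    show 0 ≤ 2 * s - sinh s
    nlinarith [mul_le_mul_of_nonneg_left h6 hs0.le]

/-- Existence of the turning point of `χ`. -/
lemma th_exists {e : ℝ} (he : 0 < e) (he2 : e < 1/2) :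
    ∃ th, 0 < th ∧ (∀ t, 0 < t → t < th → Zf e t < 0) ∧ (∀ t, th < t → 0 < Zf e t) := by
  have hinv : (1:ℝ) < 1/(2*e) := by
    rw [lt_div_iff₀ (by linarith)]
    linarith
  set s0 : ℝ := Real.sqrt (1/(2*e) - 1) with hs0
  have hs0pos : 0 < s0 := Real.sqrt_pos.2 (by linarith)
  set t0 : ℝ := min 1 s0 with ht0
  have ht0pos : 0 < t0 := lt_min (by norm_num) hs0pos
  have ht0le : t0 ≤ 1 := min_le_left _ _
  have hcosh0 : cosh t0 ≤ 1/(2*e) := by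
    have h1 : cosh t0 ≤ 1 + t0 ^ 2 := cosh_le_small ht0pos.le ht0le
    have h2 : t0 ^ 2 ≤ 1/(2*e) - 1 := by
      have h3 : t0 ≤ s0 := min_le_right _ _
      have h4 : t0 ^ 2 ≤ s0 ^ 2 := by nlinarith
      have h5 : s0 ^ 2 = 1/(2*e) - 1 := Real.sq_sqrt (by linarith)
      linarith
    linarith
  have hM0 : Mf t0 < 1/e := by
    have := Mf_lt ht0pos
    calc Mf t0 < 2 * cosh t0 := this
      _ ≤ 2 * (1/(2*e)) := by linarith
      _ = 1/e := by field_simp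
  set t1 : ℝ := Real.sqrt (6/e + 6) with ht1
  have ht1gt : 1 < t1 := by
    rw [show (1:ℝ) = Real.sqrt 1 by simp]
    apply Real.sqrt_lt_sqrt (by norm_num)
    have : 0 < 6/e := by positivity
    linarith
  have ht1pos : 0 < t1 := by linarith
  have hM1 : 1/e < Mf t1 := by
    have h1 := Mf_ge ht1pos
    have h2 : t1 ^ 2 = 6/e + 6 := Real.sq_sqrt (by positivity)
    have h3 : 1/e < t1 ^ 2 / 6 := by
      rw [h2]
      have h4 : (6/e + 6)/6 = 1/e + 1 := by ring
      rw [h4]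
      norm_num
    linarith
  have ht01 : t0 < t1 := lt_of_le_of_lt ht0le ht1gt
  have hcont : ContinuousOn Mf (Icc t0 t1) := fun t htm =>
    (hasDerivAt_Mf (lt_of_lt_of_le ht0pos htm.1)).continuousAt.continuousWithinAt
  obtain ⟨th, hthm, hMth⟩ := intermediate_value_Icc ht01.le hcont
    (mem_Icc.2 ⟨hM0.le, hM1.le⟩)
  have hthpos : 0 < th := lt_of_lt_of_le ht0pos hthm.1
  refine ⟨th, hthpos, fun t htp htlt => ?_, fun t htgt => ?_⟩
  · have h1 : Mf t < Mf th := Mf_mono (mem_Ioi.2 htp) (mem_Ioi.2 hthpos) htlt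
    rw [hMth] at h1
    have hD := D0_pos htp
    rw [Mf, div_lt_div_iff₀ hD (by positivity : (0:ℝ) < e)] at h1
    rw [Zf]; nlinarith
  · have h1 : Mf th < Mf t := Mf_mono (mem_Ioi.2 hthpos) (mem_Ioi.2 (hthpos.trans htgt)) htgt
    rw [hMth] at h1
    have hD := D0_pos (hthpos.trans htgt)
    rw [Mf, div_lt_div_iff₀ (by positivity : (0:ℝ) < e) hD] at h1
    rw [Zf]; nlinarith

lemma chi_anti {e : ℝ} (he : 0 < e) {th : ℝ} (hth : 0 < th)
    (hZ : ∀ t, 0 < t → t < th → Zf e t < 0) : StrictAntiOn (chi e) (Ioc 0 th) := by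
  refine santi (f' := fun t => e * Zf e t / (e * sinh t) ^ 2) (convex_Ioc 0 th)
    (fun t htm => hasDerivAt_chi he htm.1) (fun t htm => ?_)
  rw [interior_Ioc] at htm
  have hs : 0 < sinh t := Real.sinh_pos_iff.2 htm.1
  exact div_neg_of_neg_of_pos (mul_neg_of_pos_of_neg he (hZ t htm.1 htm.2))
    (pow_pos (mul_pos he hs) 2)

lemma chi_mono {e : ℝ} (he : 0 < e) {th : ℝ} (hth : 0 < th)
    (hZ : ∀ t, th < t → 0 < Zf e t) : StrictMonoOn (chi e) (Ici th) := by
  refine smono (f' := fun t => e * Zf e t / (e * sinh t) ^ 2) (convex_Ici th)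
    (fun t htm => hasDerivAt_chi he (lt_of_lt_of_le hth htm)) (fun t htm => ?_)
  rw [interior_Ici] at htm
  have hs : 0 < sinh t := Real.sinh_pos_iff.2 (hth.trans htm)
  exact div_pos (mul_pos he (hZ t htm)) (pow_pos (mul_pos he hs) 2)
/-! ### The curve `nu`, the coordinatewise convexity inequality, the master inequality -/

lemma eps_pos (β : ℝ) : 0 < eps β := by rw [eps]; positivity

lemma mu0_pos (β t : ℝ) : 0 < mu0 β t := by
  rw [mu0]; exact div_pos one_pos (den_pos (eps_pos β) t)

lemma nu1_pos (β t : ℝ) : 0 < (nu β t).1 := by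
  have := mu0_pos β t; rw [nu]; positivity

lemma nu2_pos (β t : ℝ) : 0 < (nu β t).2.1 := mu0_pos β t

lemma nu3_pos (β t : ℝ) : 0 < (nu β t).2.2 := by
  have := mu0_pos β t; rw [nu]; positivity

lemma nu_sum (β t : ℝ) : (nu β t).1 + (nu β t).2.1 + (nu β t).2.2 = 1 := by
  rw [nu, mu0, eps]
  have hd := den_pos (eps_pos β) t
  rw [eps] at hd
  rw [Real.cosh_eq] at *
  field_simp
  ring

lemma nu_prob (β t : ℝ) : IsProbVec (nu β t) :=
  ⟨(nu1_pos β t).le, (nu2_pos β t).le, (nu3_pos β t).le, nu_sum β t⟩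

lemma nu_m (β t : ℝ) : (nu β t).2.2 - (nu β t).1 = wf (eps β) t := by
  rw [nu, wf, mu0, eps]
  have hd := den_pos (eps_pos β) t
  rw [eps] at hd
  rw [Real.cosh_eq] at *
  rw [Real.sinh_eq]
  field_simp

lemma nu_q (β t : ℝ) : (nu β t).2.2 + (nu β t).1 = eps β * cosh t * mu0 β t := by
  rw [nu, eps, Real.cosh_eq]
  ring

lemma nu_lt_one (β t : ℝ) :
    (nu β t).1 < 1 ∧ (nu β t).2.1 < 1 ∧ (nu β t).2.2 < 1 := by
  have h1 := nu1_pos β t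
  have h2 := nu2_pos β t
  have h3 := nu3_pos β t
  have hs := nu_sum β t
  exact ⟨by linarith, by linarith, by linarith⟩

lemma nu_zero (β : ℝ) : nu β 0 = rhoBeta β := by
  rw [nu, mu0, eps, rhoBeta]
  simp [Real.cosh_zero, Real.exp_zero]
  constructor <;> ring

lemma nu_negt (β t : ℝ) : nu β (-t) = ((nu β t).2.2, (nu β t).2.1, (nu β t).1) := by
  rw [nu, nu, mu0, mu0]
  simp [Real.cosh_neg, neg_neg]

lemma log_nu1 (β t : ℝ) :
    Real.log (3 * (nu β t).1) = Real.log (3 * mu0 β t) - β - t := by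
  have h0 := mu0_pos β t
  have h1 : 3 * (nu β t).1 = 3 * mu0 β t * exp (-β) * exp (-t) := by rw [nu]; ring
  rw [h1, Real.log_mul (by positivity) (Real.exp_ne_zero _),
    Real.log_mul (by positivity) (Real.exp_ne_zero _), Real.log_exp, Real.log_exp]
  ring

lemma log_nu3 (β t : ℝ) :
    Real.log (3 * (nu β t).2.2) = Real.log (3 * mu0 β t) - β + t := by
  have h0 := mu0_pos β t
  have h1 : 3 * (nu β t).2.2 = 3 * mu0 β t * exp (-β) * exp t := by rw [nu]; ring
  rw [h1, Real.log_mul (by positivity) (Real.exp_ne_zero _),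
    Real.log_mul (by positivity) (Real.exp_ne_zero _), Real.log_exp, Real.log_exp]
  ring

lemma log_mu0 (β t : ℝ) :
    Real.log (3 * mu0 β t) = Real.log 3 - Real.log (1 + eps β * cosh t) := by
  have hd := den_pos (eps_pos β) t
  rw [mu0, Real.log_mul (by norm_num) (by positivity), Real.log_div one_ne_zero hd.ne',
    Real.log_one]
  ring

/-- `FF` is the value of the free-energy functional along the curve. -/
lemma FF_eq (β K t : ℝ) :
    relEntUnif (nu β t) + β * fK K (nu β t) = FF β K t := by
  have h1 := log_nu1 β t
  have h3 := log_nu3 β t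
  have hm := nu_m β t
  have hsum := nu_sum β t
  have hL := log_mu0 β t
  simp only [relEntUnif, fK, FF]
  rw [h1, h3, show (nu β t).2.1 = mu0 β t from rfl]
  have hmid : mu0 β t = (nu β t).2.1 := rfl
  linear_combination (Real.log (3 * mu0 β t)) * hsum + hL + t * hm +
    (-(β * K * ((nu β t).2.2 - (nu β t).1 + wf (eps β) t))) * hm +
    (Real.log (3 * mu0 β t)) * hmid

/-- Coordinatewise strong-convexity inequality for `x ↦ x log (3x)` on `[0,1]`. -/
lemma CI {a x : ℝ} (ha0 : 0 < a) (ha1 : a ≤ 1) (hx0 : 0 ≤ x) (hx1 : x ≤ 1) :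
    a * Real.log (3 * a) + (1 + Real.log (3 * a)) * (x - a) + (x - a) ^ 2 / 2 ≤
      x * Real.log (3 * x) := by
  rcases eq_or_lt_of_le hx0 with h0 | h0
  · rw [← h0]
    simp only [mul_zero, zero_mul]
    nlinarith
  -- x > 0
  have hgd : ∀ y : ℝ, 0 < y → HasDerivAt
      (fun y => y * Real.log (3 * y) - a * Real.log (3 * a) -
        (1 + Real.log (3 * a)) * (y - a) - (y - a) ^ 2 / 2)
      (Real.log (3 * y) - Real.log (3 * a) - (y - a)) y := by
    intro y hy
    have hmul : HasDerivAt (fun y : ℝ => 3 * y) 3 y := by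
      simpa using (hasDerivAt_id y).const_mul (3:ℝ)
    have hl : HasDerivAt (fun y : ℝ => Real.log (3 * y)) ((3 * y)⁻¹ * 3) y := by
      have := (Real.hasDerivAt_log (by positivity : (3:ℝ) * y ≠ 0)).comp y hmul
      exact this
    have h2 : HasDerivAt (fun y : ℝ => y * Real.log (3 * y))
        (1 * Real.log (3 * y) + y * ((3 * y)⁻¹ * 3)) y := (hasDerivAt_id y).mul hl
    have h4 : HasDerivAt
        (fun y => y * Real.log (3 * y) - a * Real.log (3 * a) -
          (1 + Real.log (3 * a)) * (y - a) - (y - a) ^ 2 / 2)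
        ((1 * Real.log (3 * y) + y * ((3 * y)⁻¹ * 3)) -
          ((1 + Real.log (3 * a)) * 1) - (2 * (y - a) ^ 1 * 1 / 2)) y := by
      exact ((h2.sub_const _).sub
        (((hasDerivAt_id y).sub_const a).const_mul _)).sub
        ((((hasDerivAt_id y).sub_const a).pow 2).div_const 2)
    have hval : (1 * Real.log (3 * y) + y * ((3 * y)⁻¹ * 3)) -
          ((1 + Real.log (3 * a)) * 1) - (2 * (y - a) ^ 1 * 1 / 2) =
        Real.log (3 * y) - Real.log (3 * a) - (y - a) := by
      have h6 : y * ((3 * y)⁻¹ * 3) = 1 := by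
        field_simp
      rw [h6]; ring
    rw [hval] at h4
    exact h4
  have key : (0:ℝ) ≤ x * Real.log (3 * x) - a * Real.log (3 * a) -
      (1 + Real.log (3 * a)) * (x - a) - (x - a) ^ 2 / 2 := by
    rcases le_or_gt a x with hax | hax
    · have hmono := mono_of
        (f := fun y => y * Real.log (3 * y) - a * Real.log (3 * a) -
          (1 + Real.log (3 * a)) * (y - a) - (y - a) ^ 2 / 2)
        (f' := fun y => Real.log (3 * y) - Real.log (3 * a) - (y - a))
        (convex_Icc a x) (fun y hy => hgd y (lt_of_lt_of_le ha0 hy.1)) ?_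
      · have h7 := hmono (left_mem_Icc.2 hax) (right_mem_Icc.2 hax) hax
        simp only [] at h7
        nlinarith [h7]
      · intro y hy
        rw [interior_Icc] at hy
        obtain ⟨hy1, hy2⟩ := hy
        have hy0 : 0 < y := ha0.trans hy1
        have hylt : y ≤ 1 := hy2.le.trans hx1
        have hlog : Real.log (3 * a) - Real.log (3 * y) ≤ a / y - 1 := by
          have heq : (3 * a) / (3 * y) = a / y := by
            rw [mul_div_mul_left _ _ (by norm_num : (3:ℝ) ≠ 0)]
          have := Real.log_le_sub_one_of_pos (show 0 < (3*a)/(3*y) by positivity)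
          rwa [Real.log_div (by positivity) (by positivity), heq] at this
        show 0 ≤ Real.log (3 * y) - Real.log (3 * a) - (y - a)
        have h5 : a / y - 1 = (a - y) / y := by field_simp
        have h7 : (1:ℝ) ≤ y⁻¹ := by
          rw [le_inv_comm₀ one_pos hy0]; simpa using hylt
        have h6 : (a - y)/y ≤ -(y - a) := by
          rw [div_eq_mul_inv]
          nlinarith
        linarith
    · have hanti := anti_of
        (f := fun y => y * Real.log (3 * y) - a * Real.log (3 * a) -
          (1 + Real.log (3 * a)) * (y - a) - (y - a) ^ 2 / 2)
        (f' := fun y => Real.log (3 * y) - Real.log (3 * a) - (y - a))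
        (convex_Icc x a) (fun y hy => hgd y (lt_of_lt_of_le h0 hy.1)) ?_
      · have h7 := hanti (left_mem_Icc.2 hax.le) (right_mem_Icc.2 hax.le) hax.le
        simp only [] at h7
        nlinarith [h7]
      · intro y hy
        rw [interior_Icc] at hy
        obtain ⟨hy1, hy2⟩ := hy
        have hy0 : 0 < y := h0.trans hy1
        have hlog : Real.log (3 * y) - Real.log (3 * a) ≤ y / a - 1 := by
          have heq : (3 * y) / (3 * a) = y / a := by
            rw [mul_div_mul_left _ _ (by norm_num : (3:ℝ) ≠ 0)]
          have := Real.log_le_sub_one_of_pos (show 0 < (3*y)/(3*a) by positivity)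
          rwa [Real.log_div (by positivity) (by positivity), heq] at this
        show Real.log (3 * y) - Real.log (3 * a) - (y - a) ≤ 0
        have h5 : y / a - 1 = (y - a) / a := by field_simp
        have h7 : (1:ℝ) ≤ a⁻¹ := by
          rw [le_inv_comm₀ one_pos ha0]; simpa using ha1
        have h6 : (y - a)/a ≤ y - a := by
          rw [div_eq_mul_inv]
          nlinarith [hy2]
        linarith
  linarith

lemma prob_bounds {p : ℝ × ℝ × ℝ} (hp : IsProbVec p) :
    p.1 ≤ 1 ∧ p.2.1 ≤ 1 ∧ p.2.2 ≤ 1 := by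
  obtain ⟨h1, h2, h3, h4⟩ := hp
  exact ⟨by linarith, by linarith, by linarith⟩

/-- The master inequality: every probability vector is dominated by the curve point
with the appropriate linear correction, with a quadratic defect. -/
lemma master (β K t : ℝ) {p : ℝ × ℝ × ℝ} (hp : IsProbVec p) :
    FF β K t + t * ((p.2.2 - p.1) - wf (eps β) t)
      - β * K * ((p.2.2 - p.1) ^ 2 - (wf (eps β) t) ^ 2)
      + ((p.1 - (nu β t).1) ^ 2 + (p.2.1 - (nu β t).2.1) ^ 2
          + (p.2.2 - (nu β t).2.2) ^ 2) / 2
      ≤ relEntUnif p + β * fK K p := by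
  obtain ⟨hx1, hx2, hx3, hxs⟩ := hp
  obtain ⟨hx1', hx2', hx3'⟩ := prob_bounds ⟨hx1, hx2, hx3, hxs⟩
  have ha1 := nu1_pos β t
  have ha2 := nu2_pos β t
  have ha3 := nu3_pos β t
  obtain ⟨hb1, hb2, hb3⟩ := nu_lt_one β t
  have has := nu_sum β t
  have C1 := CI ha1 hb1.le hx1 hx1'
  have C2 := CI ha2 hb2.le hx2 hx2'
  have C3 := CI ha3 hb3.le hx3 hx3'
  rw [log_nu1 β t] at C1
  rw [show (nu β t).2.1 = mu0 β t from rfl] at C2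
  rw [log_nu3 β t] at C3
  have hm := nu_m β t
  have hFF := FF_eq β K t
  rw [relEntUnif, fK] at hFF ⊢
  rw [log_nu1 β t, log_nu3 β t, show (nu β t).2.1 = mu0 β t from rfl] at hFF
  rw [show (nu β t).2.1 = mu0 β t from rfl] at has ⊢
  rw [← hm]
  set L := Real.log (3 * mu0 β t) with hL
  set A1 := (nu β t).1 with hA1
  set A3 := (nu β t).2.2 with hA3
  have hLsum : L * p.1 + L * p.2.1 + L * p.2.2 = L := by linear_combination L * hxs
  have hLsuma : L * A1 + L * mu0 β t + L * A3 = L := by linear_combination L * has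
  rw [← hFF]
  linarith [C1, C2, C3, hLsum, hLsuma, hxs, has]
/-! ### Derivative of `FF` and the one-dimensional classification -/

lemma wd_pos {e : ℝ} (he : 0 < e) (t : ℝ) : 0 < wd e t := by
  rw [wd]
  exact div_pos (mul_pos he (add_pos (Real.cosh_pos t) he)) (pow_pos (den_pos he t) 2)

lemma wf_sq_le {e : ℝ} (he : 0 < e) (t : ℝ) : wf e t ^ 2 ≤ 1 := by
  nlinarith [wf_lt_one he t, neg_one_lt_wf he t]

lemma hasDerivAt_FF (β K t : ℝ) :
    HasDerivAt (FF β K) (wd (eps β) t * (t - 2 * β * K * wf (eps β) t)) t := by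
  have he := eps_pos β
  have h1 : HasDerivAt (fun t => Real.log (1 + eps β * cosh t))
      (eps β * sinh t / (1 + eps β * cosh t)) t := by
    have hd : HasDerivAt (fun t : ℝ => 1 + eps β * cosh t) (eps β * sinh t) t :=
      ((Real.hasDerivAt_cosh t).const_mul (eps β)).const_add 1
    have h2 := (Real.hasDerivAt_log (den_pos he t).ne').comp t hd
    rw [div_eq_inv_mul]; exact h2
  have h2 : HasDerivAt (fun t => t * wf (eps β) t)
      (1 * wf (eps β) t + t * wd (eps β) t) t :=
    (hasDerivAt_id t).mul (hasDerivAt_wf he t)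
  have h3 : HasDerivAt (fun t => wf (eps β) t ^ 2)
      (2 * wf (eps β) t ^ 1 * wd (eps β) t) t := (hasDerivAt_wf he t).pow 2
  have h4 := ((h1.const_sub (Real.log 3)).add h2).sub (h3.const_mul (β * K))
  have h5 : HasDerivAt (FF β K)
      (-(eps β * sinh t / (1 + eps β * cosh t)) + (1 * wf (eps β) t + t * wd (eps β) t)
        - β * K * (2 * wf (eps β) t ^ 1 * wd (eps β) t)) t := h4
  convert h5 using 1
  rw [show eps β * sinh t / (1 + eps β * cosh t) = wf (eps β) t from rfl]
  ring

lemma FF_even (β K t : ℝ) : FF β K (-t) = FF β K t := by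
  rw [FF, FF, Real.cosh_neg, wf_neg (eps_pos β)]
  ring

section classify

variable {β : ℝ} (hβ0 : 0 < β)

include hβ0

lemma F_mono_piece {K p q : ℝ} (hp : 0 ≤ p)
    (hc : ∀ s, p < s → s < q → 2 * β * K < chi (eps β) s) :
    StrictMonoOn (FF β K) (Icc p q) := by
  have he := eps_pos β
  refine smono (f' := fun t => wd (eps β) t * (t - 2 * β * K * wf (eps β) t))
    (convex_Icc p q) (fun t _ => hasDerivAt_FF β K t) (fun t ht => ?_)
  rw [interior_Icc] at ht
  have ht0 : 0 < t := lt_of_le_of_lt hp ht.1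
  have hchi := hc t ht.1 ht.2
  have hw := wf_pos he ht0
  have hkey : t - 2 * β * K * wf (eps β) t = wf (eps β) t * (chi (eps β) t - 2 * β * K) := by
    linear_combination (-1 : ℝ) * (chi_w he ht0)
  show 0 < wd (eps β) t * (t - 2 * β * K * wf (eps β) t)
  rw [hkey]
  exact mul_pos (wd_pos he t) (mul_pos hw (sub_pos.2 hchi))

lemma F_anti_piece {K p q : ℝ} (hp : 0 ≤ p)
    (hc : ∀ s, p < s → s < q → chi (eps β) s < 2 * β * K) :
    StrictAntiOn (FF β K) (Icc p q) := by
  have he := eps_pos β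
  refine santi (f' := fun t => wd (eps β) t * (t - 2 * β * K * wf (eps β) t))
    (convex_Icc p q) (fun t _ => hasDerivAt_FF β K t) (fun t ht => ?_)
  rw [interior_Icc] at ht
  have ht0 : 0 < t := lt_of_le_of_lt hp ht.1
  have hchi := hc t ht.1 ht.2
  have hw := wf_pos he ht0
  have hkey : t - 2 * β * K * wf (eps β) t = wf (eps β) t * (chi (eps β) t - 2 * β * K) := by
    linear_combination (-1 : ℝ) * (chi_w he ht0)
  show wd (eps β) t * (t - 2 * β * K * wf (eps β) t) < 0
  rw [hkey]
  exact mul_neg_of_pos_of_neg (wd_pos he t) (mul_neg_of_pos_of_neg hw (by linarith))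

variable {th : ℝ} (hth : 0 < th)
  (hZn : ∀ t, 0 < t → t < th → Zf (eps β) t < 0)
  (hZp : ∀ t, th < t → 0 < Zf (eps β) t)

include hth hZn hZp

/-- Case A: `2βK ≤ χ(th)` implies `0` is the strict global minimum on `(0,∞)`. -/
lemma caseA {K : ℝ} (hA : 2 * β * K ≤ chi (eps β) th) :
    ∀ t, 0 < t → FF β K 0 < FF β K t := by
  have he := eps_pos β
  have hanti := chi_anti he hth hZn
  have hmono := chi_mono he hth hZp
  have step1 : ∀ t, 0 < t → t ≤ th → FF β K 0 < FF β K t := by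
    intro t ht0 htle
    have hpiece := F_mono_piece hβ0 (le_refl (0:ℝ)) (K := K) (q := t) (fun s hs1 hs2 => by
      have hsth : s < th := lt_of_lt_of_le hs2 htle
      exact lt_of_le_of_lt hA (hanti ⟨hs1, hsth.le⟩ ⟨hth, le_refl th⟩ hsth))
    exact hpiece (left_mem_Icc.2 ht0.le) (right_mem_Icc.2 ht0.le) ht0
  intro t ht0
  rcases le_or_gt t th with h | h
  · exact step1 t ht0 h
  · have h1 : FF β K 0 < FF β K th := step1 th hth (le_refl th)
    have hpiece := F_mono_piece hβ0 hth.le (K := K) (q := t) (fun s hs1 hs2 =>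
      lt_of_le_of_lt hA (hmono (self_mem_Ici) (mem_Ici.2 hs1.le) hs1))
    exact h1.trans (hpiece (left_mem_Icc.2 h.le) (right_mem_Icc.2 h.le) h)

/-- Case B: construction of `γ`. -/
lemma gamma_package {K : ℝ} (hB : chi (eps β) th < 2 * β * K) :
    ∃ γ, th < γ ∧ chi (eps β) γ = 2 * β * K ∧
      (∀ t, th ≤ t → t < γ → chi (eps β) t < 2 * β * K) ∧
      (∀ t, γ < t → 2 * β * K < chi (eps β) t) := by
  have he := eps_pos β
  have hmono := chi_mono he hth hZp
  set c := 2 * β * K with hc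
  set T := max (th + 1) c with hT
  have hTth : th < T := lt_of_lt_of_le (by linarith) (le_max_left _ _)
  have hT0 : 0 < T := hth.trans hTth
  have hcT : c < chi (eps β) T := lt_of_le_of_lt (le_max_right _ _) (chi_gt_self he hT0)
  have hcont : ContinuousOn (chi (eps β)) (Icc th T) := fun t htm =>
    (hasDerivAt_chi he (lt_of_lt_of_le hth htm.1)).continuousAt.continuousWithinAt
  obtain ⟨γ, hγm, hγ⟩ := intermediate_value_Icc hTth.le hcont (mem_Icc.2 ⟨hB.le, hcT.le⟩)
  have hγth : th < γ := by
    rcases eq_or_lt_of_le hγm.1 with h | h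
    · exfalso; rw [← h] at hγ; exact absurd hγ hB.ne
    · exact h
  refine ⟨γ, hγth, hγ, fun t ht1 ht2 => ?_, fun t ht1 => ?_⟩
  · have := hmono (mem_Ici.2 ht1) (mem_Ici.2 hγth.le) ht2
    rwa [hγ] at this
  · have := hmono (mem_Ici.2 hγth.le) (mem_Ici.2 (hγth.le.trans ht1.le)) ht1
    rwa [hγ] at this

/-- In case B, `γ` is the minimum of `FF` on `[th, ∞)`. -/
lemma caseB_lb {K γ : ℝ} (hγth : th < γ) (hγ : chi (eps β) γ = 2 * β * K)
    (hlt : ∀ t, th ≤ t → t < γ → chi (eps β) t < 2 * β * K)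
    (hgt : ∀ t, γ < t → 2 * β * K < chi (eps β) t) :
    ∀ t, th ≤ t → FF β K γ ≤ FF β K t := by
  intro t ht
  rcases le_or_gt t γ with h | h
  · have hpiece := F_anti_piece hβ0 (le_trans hth.le ht) (K := K) (q := γ)
      (fun s hs1 hs2 => hlt s (ht.trans hs1.le) hs2)
    rcases eq_or_lt_of_le h with h' | h'
    · rw [h']
    · exact (hpiece (left_mem_Icc.2 h) (right_mem_Icc.2 h) h').le
  · have hpiece := F_mono_piece hβ0 (hth.trans hγth).le (K := K) (q := t)
      (fun s hs1 hs2 => hgt s hs1)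
    exact (hpiece (left_mem_Icc.2 h.le) (right_mem_Icc.2 h.le) h).le

/-- In case B, any positive `t ≠ γ` is strictly worse than `γ` or than `0`. -/
lemma caseB_pos {K γ : ℝ} (hγth : th < γ) (hγ : chi (eps β) γ = 2 * β * K)
    (hlt : ∀ t, th ≤ t → t < γ → chi (eps β) t < 2 * β * K)
    (hgt : ∀ t, γ < t → 2 * β * K < chi (eps β) t) :
    ∀ t, 0 < t → t ≠ γ → FF β K γ < FF β K t ∨ FF β K 0 < FF β K t := by
  have he := eps_pos β
  have hanti := chi_anti he hth hZn
  have hmono := chi_mono he hth hZp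
  intro t ht0 htne
  rcases lt_trichotomy (chi (eps β) t) (2 * β * K) with hcl | hce | hcg
  · -- χ(t) < c : `F` strictly decreasing on `[t, γ]`
    left
    have htγ : t < γ := by
      by_contra hcon
      push_neg at hcon
      rcases eq_or_lt_of_le hcon with h | h
      · exact htne (h.symm)
      · exact absurd (hgt t h) (by linarith)
    have hpiece := F_anti_piece hβ0 ht0.le (K := K) (q := γ) (fun s hs1 hs2 => by
      rcases le_or_gt th s with h | h
      · exact hlt s h hs2
      · have hcalc : chi (eps β) s < chi (eps β) t :=
          hanti ⟨ht0, (hs1.trans h).le⟩ ⟨ht0.trans hs1, h.le⟩ hs1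
        linarith)
    exact hpiece (left_mem_Icc.2 htγ.le) (right_mem_Icc.2 htγ.le) htγ
  · -- χ(t) = c
    rcases le_or_gt t th with h | h
    · right
      have hpiece := F_mono_piece hβ0 (le_refl (0:ℝ)) (K := K) (q := t) (fun s hs1 hs2 => by
        have := hanti ⟨hs1, (hs2.le.trans h)⟩ ⟨ht0, h⟩ hs2
        rw [hce] at this
        exact this)
      exact hpiece (left_mem_Icc.2 ht0.le) (right_mem_Icc.2 ht0.le) ht0
    · exfalso
      have : t = γ := by
        have hinj := hmono.injOn
        exact hinj (mem_Ici.2 h.le) (mem_Ici.2 hγth.le) (by rw [hce, hγ])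
      exact htne this
  · rcases le_or_gt t th with h | h
    · right
      have hpiece := F_mono_piece hβ0 (le_refl (0:ℝ)) (K := K) (q := t) (fun s hs1 hs2 => by
        have := hanti ⟨hs1, (hs2.le.trans h)⟩ ⟨ht0, h⟩ hs2
        linarith)
      exact hpiece (left_mem_Icc.2 ht0.le) (right_mem_Icc.2 ht0.le) ht0
    · left
      have hγt : γ < t := by
        by_contra hcon
        push_neg at hcon
        rcases eq_or_lt_of_le hcon with h' | h'
        · exact htne h'
        · exact absurd (hlt t h.le h') (by linarith)
      have hpiece := F_mono_piece hβ0 (hth.trans hγth).le (K := K) (q := t)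
        (fun s hs1 hs2 => hgt s hs1)
      exact hpiece (left_mem_Icc.2 hγt.le) (right_mem_Icc.2 hγt.le) hγt

end classify
/-! ### The gap function `dd` and the critical value -/

lemma quad_lb {x1 x2 x3 a1 a2 a3 m : ℝ} (hm : (x3 - x1) - (a3 - a1) = m) :
    m ^ 2 / 4 ≤ ((x1 - a1) ^ 2 + (x2 - a2) ^ 2 + (x3 - a3) ^ 2) / 2 := by
  subst hm
  nlinarith [sq_nonneg ((x3 - a3) + (x1 - a1)), sq_nonneg (x2 - a2)]

/-- `dd β th K` is the infimum of `F_K(t) - F_K(0)` over `t ≥ th`. -/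
def dd (β th K : ℝ) : ℝ := sInf ((fun t => FF β K t - FF β K 0) '' Ici th)

section ddsec

variable {β : ℝ} (hβ0 : 0 < β) {th : ℝ} (hth : 0 < th)
  (hZn : ∀ t, 0 < t → t < th → Zf (eps β) t < 0)
  (hZp : ∀ t, th < t → 0 < Zf (eps β) t)

include hβ0 hth hZn hZp

lemma dd_attained (K : ℝ) : ∃ ts, th ≤ ts ∧ (∀ t, th ≤ t → FF β K ts ≤ FF β K t) ∧
    dd β th K = FF β K ts - FF β K 0 := by
  have main : ∃ ts, th ≤ ts ∧ (∀ t, th ≤ t → FF β K ts ≤ FF β K t) := by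
    rcases le_or_gt (2*β*K) (chi (eps β) th) with hA | hB
    · refine ⟨th, le_refl th, fun t ht => ?_⟩
      rcases eq_or_lt_of_le ht with h | h
      · rw [h]
      · have hpiece := F_mono_piece hβ0 hth.le (K := K) (q := t)
          (fun s hs1 _ => lt_of_le_of_lt hA
            (chi_mono (eps_pos β) hth hZp self_mem_Ici (mem_Ici.2 hs1.le) hs1))
        exact (hpiece (left_mem_Icc.2 ht) (right_mem_Icc.2 ht) h).le
    · obtain ⟨γ, hγth, hγc, hlt, hgt⟩ := gamma_package hβ0 hth hZn hZp hB
      exact ⟨γ, hγth.le, caseB_lb hβ0 hth hZn hZp hγth hγc hlt hgt⟩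
  obtain ⟨ts, hts1, hts2⟩ := main
  refine ⟨ts, hts1, hts2, ?_⟩
  apply IsLeast.csInf_eq
  constructor
  · exact ⟨ts, hts1, rfl⟩
  · rintro x ⟨t, ht, rfl⟩
    have := hts2 t ht
    simp only []
    linarith

omit hβ0 hth hZn hZp in
lemma FF_K_shift (K1 K2 t : ℝ) :
    FF β K1 t = FF β K2 t + β * (K2 - K1) * (wf (eps β) t) ^ 2 := by
  rw [FF, FF]; ring

lemma dd_le_lip (K1 K2 : ℝ) : dd β th K1 ≤ dd β th K2 + β * |K1 - K2| := by
  obtain ⟨ts2, h1, h2, h3⟩ := dd_attained hβ0 hth hZn hZp K2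
  obtain ⟨ts1, g1, g2, g3⟩ := dd_attained hβ0 hth hZn hZp K1
  have h4 : dd β th K1 ≤ FF β K1 ts2 - FF β K1 0 := by
    rw [g3]; linarith [g2 ts2 h1]
  have h5 := FF_K_shift (β := β) K1 K2 ts2
  have h6 := FF_K_shift (β := β) K1 K2 0
  have h7 : wf (eps β) 0 = 0 := wf_zero (eps_pos β)
  rw [h7] at h6
  have habs : K2 - K1 ≤ |K1 - K2| := by
    rw [abs_sub_comm]; exact le_abs_self _
  have h8 : β * (K2 - K1) * (wf (eps β) ts2) ^ 2 ≤ β * |K1 - K2| := by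
    have e1 : 0 ≤ β * (|K1 - K2| - (K2 - K1)) * (wf (eps β) ts2) ^ 2 :=
      mul_nonneg (mul_nonneg hβ0.le (by linarith)) (sq_nonneg _)
    have e2 : 0 ≤ β * |K1 - K2| * (1 - (wf (eps β) ts2) ^ 2) :=
      mul_nonneg (mul_nonneg hβ0.le (abs_nonneg _))
        (by linarith [wf_sq_le (eps_pos β) ts2])
    nlinarith [e1, e2]
  have h9 : FF β K2 ts2 - FF β K2 0 = dd β th K2 := h3.symm
  nlinarith [h4, h5, h6, h8, h9]

lemma dd_lipschitz : LipschitzWith (Real.toNNReal β) (dd β th) := by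
  apply LipschitzWith.of_dist_le_mul
  intro K1 K2
  rw [Real.dist_eq, Real.dist_eq]
  have h1 := dd_le_lip hβ0 hth hZn hZp K1 K2
  have h2 := dd_le_lip hβ0 hth hZn hZp K2 K1
  rw [abs_sub_comm K2 K1] at h2
  have hco : (Real.toNNReal β : ℝ) = β := Real.coe_toNNReal _ hβ0.le
  rw [abs_le]
  constructor <;> [nlinarith [h2, abs_nonneg (K1 - K2)]; nlinarith [h1, abs_nonneg (K1 - K2)]]

lemma dd_strict_dec {K1 K2 : ℝ} (h12 : K1 < K2) : dd β th K2 < dd β th K1 := by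
  obtain ⟨ts1, g1, g2, g3⟩ := dd_attained hβ0 hth hZn hZp K1
  obtain ⟨ts2, h1, h2, h3⟩ := dd_attained hβ0 hth hZn hZp K2
  have h4 : dd β th K2 ≤ FF β K2 ts1 - FF β K2 0 := by
    rw [h3]; linarith [h2 ts1 g1]
  have h5 := FF_K_shift (β := β) K2 K1 ts1
  have h6 := FF_K_shift (β := β) K2 K1 0
  have h7 : wf (eps β) 0 = 0 := wf_zero (eps_pos β)
  rw [h7] at h6
  have hwpos : 0 < wf (eps β) ts1 := wf_pos (eps_pos β) (lt_of_lt_of_le hth g1)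
  have h8 : β * (K1 - K2) * (wf (eps β) ts1) ^ 2 < 0 :=
    mul_neg_of_neg_of_pos (mul_neg_of_pos_of_neg hβ0 (by linarith)) (pow_pos hwpos 2)
  nlinarith [h4, h5, h6, h8, g3]

lemma dd_pos_small : 0 < dd β th (1 / (8 * β)) := by
  set K : ℝ := 1 / (8 * β) with hK
  obtain ⟨ts, h1, h2, h3⟩ := dd_attained hβ0 hth hZn hZp K
  rw [h3]
  have hM := master β K 0 (nu_prob β ts)
  rw [FF_eq β K ts] at hM
  have hm := nu_m β ts
  have hw0 : wf (eps β) 0 = 0 := wf_zero (eps_pos β)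
  rw [hw0] at hM
  have ha : (nu β 0).1 = (nu β 0).2.2 := by simp [nu]
  have hquad := quad_lb (x1 := (nu β ts).1) (x2 := (nu β ts).2.1) (x3 := (nu β ts).2.2)
    (a1 := (nu β 0).1) (a2 := (nu β 0).2.1) (a3 := (nu β 0).2.2)
    (m := wf (eps β) ts) (by linear_combination hm + ha)
  have hbk : β * K = 1/8 := by rw [hK]; field_simp
  have hwts : wf (eps β) th ≤ wf (eps β) ts :=
    ((wf_strictMono (eps_pos β)).le_iff_le).2 h1
  have hwth : 0 < wf (eps β) th := wf_pos (eps_pos β) hth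
  nlinarith [hM, hquad, hbk, hwts, hwth]

lemma dd_neg_big (K : ℝ)
    (hK : FF β 0 th - FF β 0 0 + 1 ≤ β * K * (wf (eps β) th) ^ 2) :
    dd β th K < 0 := by
  obtain ⟨ts, h1, h2, h3⟩ := dd_attained hβ0 hth hZn hZp K
  have h4 : FF β K ts ≤ FF β K th := h2 th (le_refl th)
  have h5 := FF_K_shift (β := β) K 0 th
  have h6 := FF_K_shift (β := β) K 0 0
  have h7 : wf (eps β) 0 = 0 := wf_zero (eps_pos β)
  rw [h7] at h6
  nlinarith [h3, h4, h5, h6, hK]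

/-- Existence and characterization of the critical value. -/
lemma Kc1_exists : ∃ Kc1, 0 < Kc1 ∧ dd β th Kc1 = 0 ∧
    (∀ K, 0 < K → K < Kc1 → 0 < dd β th K) ∧ (∀ K, Kc1 < K → dd β th K < 0) := by
  set K0 : ℝ := 1 / (8 * β) with hK0
  have hK0pos : 0 < K0 := by rw [hK0]; positivity
  have h0 := dd_pos_small hβ0 hth hZn hZp
  have hwth : 0 < wf (eps β) th := wf_pos (eps_pos β) hth
  set K1 : ℝ := max (K0 + 1) ((FF β 0 th - FF β 0 0 + 1) / (β * (wf (eps β) th) ^ 2))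
    with hK1def
  have hK1neg : dd β th K1 < 0 := by
    apply dd_neg_big hβ0 hth hZn hZp
    have hden : 0 < β * (wf (eps β) th) ^ 2 := mul_pos hβ0 (pow_pos hwth 2)
    have := le_max_right (K0 + 1) ((FF β 0 th - FF β 0 0 + 1) / (β * (wf (eps β) th) ^ 2))
    rw [div_le_iff₀ hden] at this
    nlinarith [this]
  have hK01 : K0 < K1 := lt_of_lt_of_le (by linarith) (le_max_left _ _)
  have hcont : ContinuousOn (dd β th) (Icc K0 K1) :=
    ((dd_lipschitz hβ0 hth hZn hZp).continuous).continuousOn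
  have hsub := intermediate_value_Icc' hK01.le hcont (mem_Icc.2 ⟨hK1neg.le, h0.le⟩)
  obtain ⟨Kc, hKcm, hKc⟩ := hsub
  refine ⟨Kc, lt_of_lt_of_le hK0pos hKcm.1, hKc, fun K _ hlt => ?_, fun K hgt => ?_⟩
  · have := dd_strict_dec hβ0 hth hZn hZp hlt
    rw [hKc] at this
    linarith
  · have := dd_strict_dec hβ0 hth hZn hZp hgt
    rw [hKc] at this
    linarith

end ddsec
/-! ### Reduction of the global variational problem to the curve -/

lemma triple_eq {p q : ℝ × ℝ × ℝ} (h1 : p.1 = q.1) (h2 : p.2.1 = q.2.1)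
    (h3 : p.2.2 = q.2.2) : p = q :=
  Prod.ext_iff.2 ⟨h1, Prod.ext_iff.2 ⟨h2, h3⟩⟩

lemma prob_m_one {p : ℝ × ℝ × ℝ} (hp : IsProbVec p) (hm : p.2.2 - p.1 = 1) :
    p = ((0:ℝ), (0:ℝ), (1:ℝ)) := by
  obtain ⟨h1, h2, h3, h4⟩ := hp
  refine triple_eq ?_ ?_ ?_ <;> simp <;> linarith

lemma prob_m_negone {p : ℝ × ℝ × ℝ} (hp : IsProbVec p) (hm : p.2.2 - p.1 = -1) :
    p = ((1:ℝ), (0:ℝ), (0:ℝ)) := by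
  obtain ⟨h1, h2, h3, h4⟩ := hp
  refine triple_eq ?_ ?_ ?_ <;> simp <;> linarith

section globalsec

variable {β : ℝ} (hβ0 : 0 < β)

include hβ0

lemma boundary1 (K : ℝ) (hK : 0 < K) :
    ∃ T : ℝ, FF β K T <
      relEntUnif ((0:ℝ), (0:ℝ), (1:ℝ)) + β * fK K ((0:ℝ), (0:ℝ), (1:ℝ)) := by
  set T : ℝ := 2 * β * K + 1 with hT
  have hprob : IsProbVec ((0:ℝ), (0:ℝ), (1:ℝ)) := by
    refine ⟨le_refl 0, le_refl 0, by norm_num, by norm_num⟩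
  have hM := master β K T hprob
  simp only [] at hM
  have hw1 : wf (eps β) T < 1 := wf_lt_one (eps_pos β) T
  have hw2 : -1 < wf (eps β) T := neg_one_lt_wf (eps_pos β) T
  have hβK : 0 < β * K := mul_pos hβ0 hK
  have hpos : 0 < T * ((1:ℝ) - 0 - wf (eps β) T)
      - β * K * (((1:ℝ) - 0) ^ 2 - (wf (eps β) T) ^ 2) := by
    have hid : T * ((1:ℝ) - 0 - wf (eps β) T)
        - β * K * (((1:ℝ) - 0) ^ 2 - (wf (eps β) T) ^ 2) =
        (1 - wf (eps β) T) * (β * K * (1 - wf (eps β) T) + 1) := by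
      rw [hT]; ring
    rw [hid]
    have := mul_pos hβK (sub_pos.2 hw1)
    nlinarith
  have hquad : 0 < (((0:ℝ) - (nu β T).1) ^ 2 + ((0:ℝ) - (nu β T).2.1) ^ 2
      + ((1:ℝ) - (nu β T).2.2) ^ 2) / 2 := by
    have h3 := (nu_lt_one β T).2.2
    have hC : 0 < ((1:ℝ) - (nu β T).2.2) ^ 2 := pow_pos (by linarith) 2
    have hA := sq_nonneg ((0:ℝ) - (nu β T).1)
    have hB := sq_nonneg ((0:ℝ) - (nu β T).2.1)
    linarith
  exact ⟨T, by nlinarith [hM, hpos, hquad]⟩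

lemma boundary2 (K : ℝ) (hK : 0 < K) :
    ∃ T : ℝ, FF β K T <
      relEntUnif ((1:ℝ), (0:ℝ), (0:ℝ)) + β * fK K ((1:ℝ), (0:ℝ), (0:ℝ)) := by
  set S : ℝ := 2 * β * K + 1 with hS
  have hprob : IsProbVec ((1:ℝ), (0:ℝ), (0:ℝ)) := by
    refine ⟨by norm_num, le_refl 0, le_refl 0, by norm_num⟩
  have hM := master β K (-S) hprob
  simp only [] at hM
  rw [wf_neg (eps_pos β)] at hM
  have hw1 : wf (eps β) S < 1 := wf_lt_one (eps_pos β) S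
  have hw2 : -1 < wf (eps β) S := neg_one_lt_wf (eps_pos β) S
  have hβK : 0 < β * K := mul_pos hβ0 hK
  have hpos : 0 < (-S) * ((0:ℝ) - 1 - -(wf (eps β) S))
      - β * K * (((0:ℝ) - 1) ^ 2 - (wf (eps β) S) ^ 2) := by
    have hid : (-S) * ((0:ℝ) - 1 - -(wf (eps β) S))
        - β * K * (((0:ℝ) - 1) ^ 2 - (wf (eps β) S) ^ 2) =
        (1 - wf (eps β) S) * (β * K * (1 - wf (eps β) S) + 1) := by
      rw [hS]; ring
    rw [hid]
    have := mul_pos hβK (sub_pos.2 hw1)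
    nlinarith
  have hquad : 0 < (((1:ℝ) - (nu β (-S)).1) ^ 2 + ((0:ℝ) - (nu β (-S)).2.1) ^ 2
      + ((0:ℝ) - (nu β (-S)).2.2) ^ 2) / 2 := by
    have h3 := (nu_lt_one β (-S)).1
    have hC : 0 < ((1:ℝ) - (nu β (-S)).1) ^ 2 := pow_pos (by linarith) 2
    have hA := sq_nonneg ((0:ℝ) - (nu β (-S)).2.1)
    have hB := sq_nonneg ((0:ℝ) - (nu β (-S)).2.2)
    linarith
  exact ⟨-S, by nlinarith [hM, hpos, hquad]⟩

lemma curve_glb (K : ℝ) (hK : 0 < K) {ts : ℝ} (hts : ∀ t, FF β K ts ≤ FF β K t)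
    {p : ℝ × ℝ × ℝ} (hp : IsProbVec p) :
    FF β K ts ≤ relEntUnif p + β * fK K p := by
  obtain ⟨hb1, hb2, hb3⟩ := prob_bounds hp
  obtain ⟨h1, h2, h3, h4⟩ := hp
  have hm1 : -1 ≤ p.2.2 - p.1 := by linarith
  have hm2 : p.2.2 - p.1 ≤ 1 := by linarith
  rcases eq_or_lt_of_le hm2 with he1 | he1
  · -- m = 1
    have hpe := prob_m_one ⟨h1, h2, h3, h4⟩ he1
    obtain ⟨T, hT⟩ := boundary1 hβ0 K hK
    rw [hpe]
    exact le_trans (hts T) hT.le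
  rcases eq_or_lt_of_le hm1 with he2 | he2
  · -- m = -1
    have hpe := prob_m_negone ⟨h1, h2, h3, h4⟩ he2.symm
    obtain ⟨T, hT⟩ := boundary2 hβ0 K hK
    rw [hpe]
    exact le_trans (hts T) hT.le
  · -- |m| < 1
    obtain ⟨t', ht'⟩ := wf_surj (eps_pos β) (abs_lt.2 ⟨he2, he1⟩)
    have hM := master β K t' ⟨h1, h2, h3, h4⟩
    rw [ht'] at hM
    have hq : 0 ≤ ((p.1 - (nu β t').1) ^ 2 + (p.2.1 - (nu β t').2.1) ^ 2
        + (p.2.2 - (nu β t').2.2) ^ 2) / 2 := by positivity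
    nlinarith [hts t', hM, hq]

lemma curve_mem (K : ℝ) (hK : 0 < K) {ts : ℝ} (hts : ∀ t, FF β K ts ≤ FF β K t)
    {t : ℝ} (ht : FF β K t = FF β K ts) : nu β t ∈ canonE β K := by
  refine ⟨nu_prob β t, fun q hq => ?_⟩
  rw [FF_eq β K t, ht]
  exact curve_glb hβ0 K hK hts hq

lemma canonE_sub (K : ℝ) (hK : 0 < K) {ts : ℝ} (hts : ∀ t, FF β K ts ≤ FF β K t)
    {p : ℝ × ℝ × ℝ} (hp : p ∈ canonE β K) :
    ∃ t', p = nu β t' ∧ FF β K t' = FF β K ts := by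
  obtain ⟨hprob, hmin⟩ := hp
  have hub : relEntUnif p + β * fK K p ≤ FF β K ts := by
    have := hmin (nu β ts) (nu_prob β ts)
    rwa [FF_eq β K ts] at this
  have hlb := curve_glb hβ0 K hK hts hprob
  have heq : relEntUnif p + β * fK K p = FF β K ts := le_antisymm hub hlb
  obtain ⟨hb1, hb2, hb3⟩ := prob_bounds hprob
  obtain ⟨h1, h2, h3, h4⟩ := hprob
  have hm1 : -1 ≤ p.2.2 - p.1 := by linarith
  have hm2 : p.2.2 - p.1 ≤ 1 := by linarith
  rcases eq_or_lt_of_le hm2 with he1 | he1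
  · exfalso
    have hpe := prob_m_one ⟨h1, h2, h3, h4⟩ he1
    obtain ⟨T, hT⟩ := boundary1 hβ0 K hK
    rw [hpe] at heq
    rw [heq] at hT
    exact absurd (hts T) (not_le.2 hT)
  rcases eq_or_lt_of_le hm1 with he2 | he2
  · exfalso
    have hpe := prob_m_negone ⟨h1, h2, h3, h4⟩ he2.symm
    obtain ⟨T, hT⟩ := boundary2 hβ0 K hK
    rw [hpe] at heq
    rw [heq] at hT
    exact absurd (hts T) (not_le.2 hT)
  · obtain ⟨t', ht'⟩ := wf_surj (eps_pos β) (abs_lt.2 ⟨he2, he1⟩)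
    have hM := master β K t' ⟨h1, h2, h3, h4⟩
    rw [ht'] at hM
    rw [heq] at hM
    have hFt := hts t'
    -- quadratic defect must vanish
    have hA := sq_nonneg (p.1 - (nu β t').1)
    have hB := sq_nonneg (p.2.1 - (nu β t').2.1)
    have hC := sq_nonneg (p.2.2 - (nu β t').2.2)
    have e1 : (p.1 - (nu β t').1) ^ 2 = 0 :=
      le_antisymm (by nlinarith [hM, hFt, hB, hC]) hA
    have e2 : (p.2.1 - (nu β t').2.1) ^ 2 = 0 :=
      le_antisymm (by nlinarith [hM, hFt, hA, hC]) hB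
    have e3 : (p.2.2 - (nu β t').2.2) ^ 2 = 0 :=
      le_antisymm (by nlinarith [hM, hFt, hA, hB]) hC
    have hq1 : p.1 = (nu β t').1 :=
      sub_eq_zero.1 (pow_eq_zero_iff (by norm_num : (2:ℕ) ≠ 0) |>.1 e1)
    have hq2 : p.2.1 = (nu β t').2.1 :=
      sub_eq_zero.1 (pow_eq_zero_iff (by norm_num : (2:ℕ) ≠ 0) |>.1 e2)
    have hq3 : p.2.2 = (nu β t').2.2 :=
      sub_eq_zero.1 (pow_eq_zero_iff (by norm_num : (2:ℕ) ≠ 0) |>.1 e3)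
    have hpe : p = nu β t' := triple_eq hq1 hq2 hq3
    refine ⟨t', hpe, ?_⟩
    rw [hpe] at heq
    rw [FF_eq β K t'] at heq
    exact heq

lemma canonE_eq_image (K : ℝ) (hK : 0 < K) {ts : ℝ}
    (hts : ∀ t : ℝ, FF β K ts ≤ FF β K t) :
    canonE β K = nu β '' {t | FF β K t = FF β K ts} := by
  ext p
  constructor
  · intro hp
    obtain ⟨t', hpe, ht'⟩ := canonE_sub hβ0 K hK hts hp
    exact ⟨t', ht', hpe.symm⟩
  · rintro ⟨t, ht, rfl⟩
    exact curve_mem hβ0 K hK hts ht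

end globalsec
/-! ### The three scenarios -/

section scenarios

variable {β : ℝ} (hβ0 : 0 < β) {th : ℝ} (hth : 0 < th)
  (hZn : ∀ t, 0 < t → t < th → Zf (eps β) t < 0)
  (hZp : ∀ t, th < t → 0 < Zf (eps β) t)

include hβ0 hth hZn hZp

lemma FF_min_zero {K : ℝ} (hdd : 0 < dd β th K) :
    ∀ t : ℝ, t ≠ 0 → FF β K 0 < FF β K t := by
  have hpos : ∀ t, 0 < t → FF β K 0 < FF β K t := by
    intro t ht0
    rcases le_or_gt (2*β*K) (chi (eps β) th) with hA | hB
    · exact caseA hβ0 hth hZn hZp hA t ht0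
    · obtain ⟨γ, hγth, hγc, hlt, hgt⟩ := gamma_package hβ0 hth hZn hZp hB
      obtain ⟨ts, h1, h2, h3⟩ := dd_attained hβ0 hth hZn hZp K
      have hγ0 : FF β K 0 < FF β K γ := by
        have h5 := h2 γ hγth.le
        linarith [hdd, h3]
      rcases eq_or_ne t γ with rfl | hne
      · exact hγ0
      · rcases caseB_pos hβ0 hth hZn hZp hγth hγc hlt hgt t ht0 hne with h | h
        · linarith
        · exact h
  intro t hne
  rcases lt_trichotomy t 0 with h | h | h
  · have heven : FF β K t = FF β K (-t) := by
      have h6 := FF_even β K (-t); rw [neg_neg] at h6; exact h6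
    rw [heven]; exact hpos (-t) (by linarith)
  · exact absurd h hne
  · exact hpos t h

lemma scenario_i {K : ℝ} (hK : 0 < K) (hdd : 0 < dd β th K) :
    canonE β K = {rhoBeta β} := by
  have hstrict := FF_min_zero hβ0 hth hZn hZp hdd
  have hts : ∀ t, FF β K 0 ≤ FF β K t := fun t => by
    rcases eq_or_ne t 0 with rfl | h
    · exact le_refl _
    · exact (hstrict t h).le
  rw [canonE_eq_image hβ0 K hK hts]
  have hset : {t : ℝ | FF β K t = FF β K 0} = {(0:ℝ)} := by
    ext t
    simp only [mem_setOf_eq, mem_singleton_iff]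
    constructor
    · intro h
      by_contra hne
      exact absurd h (ne_of_gt (hstrict t hne))
    · rintro rfl; rfl
  rw [hset, image_singleton, nu_zero]

lemma scenario_B {K : ℝ} (hdd : dd β th K ≤ 0) :
    ∃ γ, th < γ ∧ FF β K γ - FF β K 0 = dd β th K ∧
      (∀ t : ℝ, FF β K γ ≤ FF β K t) ∧
      (∀ t : ℝ, 0 < t → t ≠ γ → FF β K γ < FF β K t ∨ FF β K 0 < FF β K t) := by
  rcases le_or_gt (2*β*K) (chi (eps β) th) with hA | hB
  · exfalso
    obtain ⟨ts, h1, h2, h3⟩ := dd_attained hβ0 hth hZn hZp K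
    have := caseA hβ0 hth hZn hZp hA ts (lt_of_lt_of_le hth h1)
    linarith [h3]
  obtain ⟨γ, hγth, hγc, hlt, hgt⟩ := gamma_package hβ0 hth hZn hZp hB
  obtain ⟨ts, h1, h2, h3⟩ := dd_attained hβ0 hth hZn hZp K
  have hγts : FF β K γ = FF β K ts :=
    le_antisymm (caseB_lb hβ0 hth hZn hZp hγth hγc hlt hgt ts h1) (h2 γ hγth.le)
  have hdval : FF β K γ - FF β K 0 = dd β th K := by rw [h3, hγts]
  have hγ0 : FF β K γ ≤ FF β K 0 := by linarith
  have hposmin : ∀ t, 0 ≤ t → FF β K γ ≤ FF β K t := by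
    intro t ht0
    rcases eq_or_lt_of_le ht0 with rfl | htpos
    · exact hγ0
    · rcases eq_or_ne t γ with rfl | hne
      · exact le_refl _
      · rcases caseB_pos hβ0 hth hZn hZp hγth hγc hlt hgt t htpos hne with h | h
        · exact h.le
        · linarith
  have hmin : ∀ t, FF β K γ ≤ FF β K t := by
    intro t
    rcases le_or_gt 0 t with h | h
    · exact hposmin t h
    · have heven : FF β K t = FF β K (-t) := by
        have h6 := FF_even β K (-t); rw [neg_neg] at h6; exact h6
      rw [heven]; exact hposmin (-t) (by linarith)
  exact ⟨γ, hγth, hdval, hmin, caseB_pos hβ0 hth hZn hZp hγth hγc hlt hgt⟩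

end scenarios

lemma nu_ne_of_wf {β s t : ℝ} (h : wf (eps β) s ≠ wf (eps β) t) : nu β s ≠ nu β t := by
  intro hc
  apply h
  rw [← nu_m β s, ← nu_m β t, hc]

lemma minset_poschar {β K γ : ℝ}
    (hpos : ∀ t : ℝ, 0 < t → t ≠ γ → FF β K γ < FF β K t ∨ FF β K 0 < FF β K t)
    (h0 : FF β K γ ≤ FF β K 0) :
    ∀ t, 0 < t → FF β K t = FF β K γ → t = γ := by
  intro t ht h
  by_contra hc
  rcases hpos t ht hc with hx | hx
  · rw [h] at hx; exact lt_irrefl _ hx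
  · rw [h] at hx; linarith

lemma FF_even' (β K t : ℝ) : FF β K t = FF β K (-t) := by
  have h6 := FF_even β K (-t); rwa [neg_neg] at h6

lemma minset_ii {β K γ : ℝ} (hγpos : 0 < γ)
    (hpos : ∀ t : ℝ, 0 < t → t ≠ γ → FF β K γ < FF β K t ∨ FF β K 0 < FF β K t)
    (h0 : FF β K 0 = FF β K γ) :
    {t : ℝ | FF β K t = FF β K γ} = {0, γ, -γ} := by
  have hchar := minset_poschar hpos h0.symm.le
  ext t
  simp only [mem_setOf_eq, mem_insert_iff, mem_singleton_iff]
  constructor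
  · intro h
    rcases lt_trichotomy t 0 with hn | rfl | hp
    · right; right
      have heven := FF_even' β K t
      have hγ : -t = γ := hchar (-t) (by linarith) (by rw [← heven]; exact h)
      linarith
    · left; rfl
    · right; left; exact hchar t hp h
  · intro h
    rcases h with rfl | rfl | rfl
    · exact h0
    · rfl
    · exact (FF_even β K γ)

lemma minset_iii {β K γ : ℝ} (hγpos : 0 < γ)
    (hpos : ∀ t : ℝ, 0 < t → t ≠ γ → FF β K γ < FF β K t ∨ FF β K 0 < FF β K t)
    (h0 : FF β K γ < FF β K 0) :
    {t : ℝ | FF β K t = FF β K γ} = {γ, -γ} := by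
  have hchar := minset_poschar hpos h0.le
  ext t
  simp only [mem_setOf_eq, mem_insert_iff, mem_singleton_iff]
  constructor
  · intro h
    rcases lt_trichotomy t 0 with hn | rfl | hp
    · right
      have heven := FF_even' β K t
      have hγ : -t = γ := hchar (-t) (by linarith) (by rw [← heven]; exact h)
      linarith
    · exfalso; rw [h] at h0; exact lt_irrefl _ h0
    · left; exact hchar t hp h
  · intro h
    rcases h with rfl | rfl
    · rfl
    · exact (FF_even β K γ)

end BEG

open BEG

/-- Fix `β > log 4`.  There is a critical value `K_c^{(1)}(β) > 0` such
that: (i) for `0 < K < K_c^{(1)}(β)`, `E_{β,K} = {ρ_β}`; (ii) for `K = K_c^{(1)}(β)`,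
`E_{β,K} = {ρ_β, ν⁺, ν⁻}` with `ν⁺ ≠ ν⁻`, both different from `ρ_β`; (iii) for
`K > K_c^{(1)}(β)`, `E_{β,K} = {ν⁺, ν⁻}` likewise; and in cases (ii), (iii) `ν⁻`
is obtained from `ν⁺` by interchanging the components at `−1` and at `1`. -/
theorem canonE_structure_first_order (β : ℝ) (hβ : Real.log 4 < β) :
    ∃ Kc1 : ℝ, 0 < Kc1 ∧
      (∀ K : ℝ, 0 < K → K < Kc1 → canonE β K = {rhoBeta β}) ∧
      (∃ νp νm : ℝ × ℝ × ℝ,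
        νp ≠ νm ∧ νp ≠ rhoBeta β ∧ νm ≠ rhoBeta β ∧
        canonE β Kc1 = {rhoBeta β, νp, νm} ∧
        νm.1 = νp.2.2 ∧ νm.2.1 = νp.2.1 ∧ νm.2.2 = νp.1) ∧
      (∀ K : ℝ, Kc1 < K →
        ∃ νp νm : ℝ × ℝ × ℝ,
          νp ≠ νm ∧ νp ≠ rhoBeta β ∧ νm ≠ rhoBeta β ∧
          canonE β K = {νp, νm} ∧
          νm.1 = νp.2.2 ∧ νm.2.1 = νp.2.1 ∧ νm.2.2 = νp.1) := by
  have hβ0 : 0 < β := lt_trans (Real.log_pos (by norm_num)) hβ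
  have he : 0 < eps β := eps_pos β
  have he2 : eps β < 1/2 := by
    have h1 : Real.exp (-β) < Real.exp (-(Real.log 4)) :=
      Real.exp_lt_exp.2 (by linarith)
    have h2 : Real.exp (-(Real.log 4)) = 1/4 := by
      rw [Real.exp_neg, Real.exp_log (by norm_num : (0:ℝ) < 4)]
      norm_num
    rw [h2] at h1
    rw [eps]; linarith
  obtain ⟨th, hth, hZn, hZp⟩ := th_exists he he2
  obtain ⟨Kc, hKcpos, hKc0, hKlt, hKgt⟩ := Kc1_exists hβ0 hth hZn hZp
  refine ⟨Kc, hKcpos, ?_, ?_, ?_⟩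
  · intro K hK0 hKK
    exact scenario_i hβ0 hth hZn hZp hK0 (hKlt K hK0 hKK)
  · obtain ⟨γ, hγth, hdval, hmin, hpos⟩ :=
      scenario_B hβ0 hth hZn hZp (K := Kc) (le_of_eq hKc0)
    have hγpos : 0 < γ := hth.trans hγth
    have hwγ : 0 < wf (eps β) γ := wf_pos he hγpos
    have h0 : FF β Kc 0 = FF β Kc γ := by
      rw [hKc0] at hdval; linarith
    refine ⟨nu β γ, nu β (-γ), ?_, ?_, ?_, ?_, ?_, ?_, ?_⟩
    · apply nu_ne_of_wf
      rw [wf_neg he]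
      intro hc
      linarith
    · rw [← nu_zero β]
      apply nu_ne_of_wf
      rw [wf_zero he]
      exact ne_of_gt hwγ
    · rw [← nu_zero β]
      apply nu_ne_of_wf
      rw [wf_neg he, wf_zero he]
      intro hc
      linarith
    · rw [canonE_eq_image hβ0 Kc hKcpos (ts := γ) hmin,
        minset_ii hγpos hpos h0,
        Set.image_insert_eq, Set.image_insert_eq, Set.image_singleton, nu_zero]
    · rw [nu_negt β γ]
    · rw [nu_negt β γ]
    · rw [nu_negt β γ]
  · intro K hKK
    have hK0 : 0 < K := hKcpos.trans hKK
    have hddneg := hKgt K hKK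
    obtain ⟨γ, hγth, hdval, hmin, hpos⟩ :=
      scenario_B hβ0 hth hZn hZp (K := K) hddneg.le
    have hγpos : 0 < γ := hth.trans hγth
    have hwγ : 0 < wf (eps β) γ := wf_pos he hγpos
    have h0 : FF β K γ < FF β K 0 := by linarith
    refine ⟨nu β γ, nu β (-γ), ?_, ?_, ?_, ?_, ?_, ?_, ?_⟩
    · apply nu_ne_of_wf
      rw [wf_neg he]
      intro hc
      linarith
    · rw [← nu_zero β]
      apply nu_ne_of_wf
      rw [wf_zero he]
      exact ne_of_gt hwγ
    · rw [← nu_zero β]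
      apply nu_ne_of_wf
      rw [wf_neg he, wf_zero he]
      intro hc
      linarith
    · rw [canonE_eq_image hβ0 K hK0 (ts := γ) hmin,
        minset_iii hγpos hpos h0,
        Set.image_insert_eq, Set.image_singleton]
    · rw [nu_negt β γ]
    · rw [nu_negt β γ]
    · rw [nu_negt β γ]
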